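/- arXiv:1107.0414 — 2 statements merged into one kernel-verified Lean document; each statement's English description precedes it below -/
import Mathlib

section
/- The eigenvalues of the normalized adjacency matrix D^{−1/2} W D^{−1/2} of the path graph on N vertices (unit edge weights, no self-loops) are cos(π(k−1)/(N−1)) for k = 1, 2, ..., N. -/
open Matrix Polynomial BigOperators

/-- The adjacency matrix of the path graph on `N` vertices. -/
noncomputable def pathAdj (N : ℕ) : Matrix (Fin N) (Fin N) ℝ :=
  Matrix.of fun i j => if ((i : ℤ) - (j : ℤ)).natAbs = 1 then (1 : ℝ) else 0

/-- The normalized adjacency matrix `D^{-1/2} W D^{-1/2}` of the path graph. -/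
noncomputable def pathNormAdj (N : ℕ) : Matrix (Fin N) (Fin N) ℝ :=
  Matrix.of fun i j =>
    pathAdj N i j / (Real.sqrt (∑ k, pathAdj N i k) * Real.sqrt (∑ k, pathAdj N j k))

/-- Row sums of the path adjacency condition: the neighbours of `i` in `{0,…,N-1}`. -/
lemma pathAdj_sumW (N : ℕ) (hN : 2 ≤ N) (i : ℕ) (hi : i < N) (f : ℕ → ℝ) :
    (∑ j ∈ Finset.range N, (if ((i:ℤ) - (j:ℤ)).natAbs = 1 then f j else 0))
      = if i = 0 then f 1 else if i = N - 1 then f (N - 2) else f (i-1) + f (i+1) := by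
  rw [← Finset.sum_filter]
  by_cases h0 : i = 0
  · subst h0
    have : (Finset.range N).filter (fun (j : ℕ) => (((0:ℕ):ℤ) - (j:ℤ)).natAbs = 1) = {1} := by
      ext j; simp only [Finset.mem_filter, Finset.mem_range, Finset.mem_singleton]; omega
    rw [this]; simp
  by_cases h1 : i = N - 1
  · subst h1
    have : (Finset.range N).filter (fun (j : ℕ) => (((N-1:ℕ):ℤ) - (j:ℤ)).natAbs = 1) = {N-2} := by
      ext j; simp only [Finset.mem_filter, Finset.mem_range, Finset.mem_singleton]; omega
    rw [this, if_neg h0, if_pos rfl, Finset.sum_singleton]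
  · have : (Finset.range N).filter (fun (j : ℕ) => ((i:ℤ) - (j:ℤ)).natAbs = 1) = {i-1, i+1} := by
      ext j; simp only [Finset.mem_filter, Finset.mem_range, Finset.mem_insert,
        Finset.mem_singleton]; omega
    rw [this, if_neg h0, if_neg h1, Finset.sum_pair (by omega)]

/-- Rewriting a `Fin`-indexed weighted sum over a row of `pathAdj` as a range sum. -/
lemma pathAdj_sumFin (N : ℕ) (i : Fin N) (f : ℕ → ℝ) :
    (∑ j, pathAdj N i j * f j)
      = ∑ j ∈ Finset.range N, (if (((i:ℕ):ℤ) - (j:ℤ)).natAbs = 1 then f j else 0) := by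
  rw [← Fin.sum_univ_eq_sum_range (fun j => if (((i:ℕ):ℤ) - (j:ℤ)).natAbs = 1 then f j else 0) N]
  apply Finset.sum_congr rfl
  intro j _
  simp only [pathAdj, Matrix.of_apply, ite_mul, one_mul, zero_mul]

/-- The degrees of the path graph: `1` at the two endpoints, `2` in between. -/
lemma pathAdj_rowsum (N : ℕ) (hN : 2 ≤ N) (i : Fin N) :
    (∑ k, pathAdj N i k) = if (i:ℕ) = 0 ∨ (i:ℕ) = N - 1 then 1 else 2 := by
  have h := pathAdj_sumFin N i (fun _ => (1:ℝ))
  simp only [mul_one] at h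
  rw [h, pathAdj_sumW N hN i i.isLt]
  by_cases h0 : (i:ℕ) = 0
  · simp [h0]
  by_cases h1 : (i:ℕ) = N - 1
  · simp [h0, h1]
  · rw [if_neg h0, if_neg h1, if_neg (by tauto)]; norm_num

/-- The key trigonometric identity: `cos (θ j)` summed over the neighbours of `i`
equals `cos θ · d i · cos (θ i)` where `θ = π k / (N-1)`. -/
lemma pathAdj_key (N k i : ℕ) (hN : 2 ≤ N) (hi : i < N) :
    (∑ j ∈ Finset.range N,
        (if ((i:ℤ) - (j:ℤ)).natAbs = 1 then Real.cos (Real.pi * k / ((N:ℝ) - 1) * j) else 0))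
      = Real.cos (Real.pi * k / ((N:ℝ) - 1)) * (if i = 0 ∨ i = N - 1 then 1 else 2)
          * Real.cos (Real.pi * k / ((N:ℝ) - 1) * i) := by
  set θ := Real.pi * k / ((N:ℝ) - 1) with hθ
  have hN1 : ((N:ℝ) - 1) ≠ 0 := by
    have : (2:ℝ) ≤ (N:ℝ) := by exact_mod_cast hN
    linarith
  rw [pathAdj_sumW N hN i hi (fun j => Real.cos (θ * j))]
  by_cases h0 : i = 0
  · subst h0
    rw [if_pos rfl, if_pos (Or.inl rfl)]
    norm_num
  by_cases h1 : i = N - 1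
  · subst h1
    rw [if_neg h0, if_pos rfl, if_pos (Or.inr rfl)]
    have hc2 : ((N - 2 : ℕ) : ℝ) = (N:ℝ) - 2 := by
      rw [Nat.cast_sub (by omega)]; norm_num
    have hc1 : ((N - 1 : ℕ) : ℝ) = (N:ℝ) - 1 := by
      rw [Nat.cast_sub (by omega)]; norm_num
    have hπ : θ * ((N:ℝ) - 1) = (k:ℝ) * Real.pi := by
      rw [hθ]; field_simp
    have harg : θ * ((N:ℝ) - 2) = (k:ℝ) * Real.pi - θ := by
      rw [← hπ]; ring
    rw [hc2, hc1, harg, hπ, Real.cos_sub, Real.sin_nat_mul_pi]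
    ring
  · rw [if_neg h0, if_neg h1, if_neg (by tauto)]
    have hc1 : ((i - 1 : ℕ) : ℝ) = (i:ℝ) - 1 := by
      rw [Nat.cast_sub (by omega)]; norm_num
    have hcp : ((i + 1 : ℕ) : ℝ) = (i:ℝ) + 1 := by push_cast; ring
    rw [hc1, hcp, show θ * ((i:ℝ) - 1) = θ * i - θ by ring,
      show θ * ((i:ℝ) + 1) = θ * i + θ by ring, Real.cos_sub, Real.cos_add]
    ring

/-- Each `cos (π k / (N-1))` is an eigenvalue of the normalized adjacency matrix,
witnessed by the eigenvector `v i = √(d i) · cos (π k i / (N-1))`. -/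
lemma pathNormAdj_eigen (N : ℕ) (hN : 2 ≤ N) (k : ℕ) :
    ∃ v : Fin N → ℝ, v ≠ 0 ∧
      (pathNormAdj N).mulVec v = Real.cos (Real.pi * k / ((N:ℝ) - 1)) • v := by
  set θ := Real.pi * k / ((N:ℝ) - 1) with hθ
  have hdpos : ∀ i : Fin N, 0 < ∑ j, pathAdj N i j := by
    intro i; rw [pathAdj_rowsum N hN i]; split <;> norm_num
  have hs : ∀ i : Fin N, Real.sqrt (∑ j, pathAdj N i j) ≠ 0 := fun i =>
    Real.sqrt_ne_zero'.mpr (hdpos i)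
  refine ⟨fun i => Real.sqrt (∑ j, pathAdj N i j) * Real.cos (θ * ((i : ℕ) : ℝ)), ?_, ?_⟩
  · intro h
    have h0 := congrFun h ⟨0, by omega⟩
    simp only [Pi.zero_apply] at h0
    rw [pathAdj_rowsum N hN ⟨0, by omega⟩] at h0
    simp at h0
  · funext i
    simp only [Matrix.mulVec, dotProduct, Pi.smul_apply, smul_eq_mul]
    have step1 : ∀ j : Fin N,
        pathNormAdj N i j * (Real.sqrt (∑ l, pathAdj N j l) * Real.cos (θ * ((j : ℕ) : ℝ)))
          = (pathAdj N i j * Real.cos (θ * ((j : ℕ) : ℝ))) / Real.sqrt (∑ l, pathAdj N i l) := by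
      intro j
      have hi := hs i
      have hj := hs j
      simp only [pathNormAdj, Matrix.of_apply]
      field_simp
    rw [Finset.sum_congr rfl (fun j _ => step1 j), ← Finset.sum_div]
    rw [pathAdj_sumFin N i (fun j => Real.cos (θ * (j : ℝ))), pathAdj_key N k i hN i.isLt]
    rw [div_eq_iff (hs i), ← pathAdj_rowsum N hN i]
    have hms := Real.mul_self_sqrt (le_of_lt (hdpos i))
    linear_combination (-(Real.cos θ * Real.cos (θ * ((i:ℕ):ℝ)))) * hms

/-- The eigenvalues (with multiplicity) of the normalized adjacency matrix
`D^{−1/2} W D^{−1/2}` of the path graph on `N` vertices are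
`cos(π(k−1)/(N−1))` for `k = 1,…,N`: its characteristic polynomial is
`∏_{k=0}^{N-1} (X − cos(πk/(N−1)))`. -/
theorem path_normalized_adjacency_eigenvalues (N : ℕ) (hN : 2 ≤ N) :
    (pathNormAdj N).charpoly
      = ∏ k ∈ Finset.range N, (X - C (Real.cos (Real.pi * (k : ℝ) / ((N : ℝ) - 1)))) := by
  set M := pathNormAdj N with hM
  set lam : ℕ → ℝ := fun k => Real.cos (Real.pi * (k : ℝ) / ((N : ℝ) - 1)) with hlam
  have hNR : (2:ℝ) ≤ (N:ℝ) := by exact_mod_cast hN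
  -- each lam k is a root of the charpoly
  have hroot : ∀ k ∈ Finset.range N, M.charpoly.IsRoot (lam k) := by
    intro k hk
    obtain ⟨v, hv0, hveq⟩ := pathNormAdj_eigen N hN k
    have heval : M.charpoly.eval (lam k)
        = (Matrix.diagonal (fun _ : Fin N => lam k) - M).det := by
      rw [Matrix.charpoly]
      have h := RingHom.map_det (Polynomial.evalRingHom (lam k)) (charmatrix M)
      rw [show ((Polynomial.evalRingHom (lam k)) (charmatrix M).det)
          = (charmatrix M).det.eval (lam k) from rfl] at h
      rw [h]
      congr 1
      ext i j
      by_cases hij : i = j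
      · subst hij
        simp [charmatrix_apply_eq, Matrix.diagonal_apply_eq]
      · simp [charmatrix_apply_ne _ _ _ hij, Matrix.diagonal_apply_ne _ hij]
    have hker : (Matrix.diagonal (fun _ : Fin N => lam k) - M).mulVec v = 0 := by
      rw [Matrix.sub_mulVec, hveq]
      funext i
      simp [Matrix.mulVec_diagonal, hlam]
    have hdet : (Matrix.diagonal (fun _ : Fin N => lam k) - M).det = 0 :=
      (Matrix.exists_mulVec_eq_zero_iff).mp ⟨v, hv0, hker⟩
    rw [Polynomial.IsRoot, heval, hdet]
  -- the lam k are pairwise distinct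
  have hinj : ∀ a ∈ Finset.range N, ∀ b ∈ Finset.range N, a ≠ b → lam a ≠ lam b := by
    intro a ha b hb hab
    simp only [Finset.mem_range] at ha hb
    have hpos : (0:ℝ) < (N:ℝ) - 1 := by linarith
    have hmem : ∀ c : ℕ, c < N → Real.pi * (c:ℝ) / ((N:ℝ) - 1) ∈ Set.Icc 0 Real.pi := by
      intro c hc
      constructor
      · positivity
      · rw [div_le_iff₀ hpos]
        have : (c:ℝ) ≤ (N:ℝ) - 1 := by
          have : (c:ℝ) + 1 ≤ (N:ℝ) := by exact_mod_cast hc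
          linarith
        nlinarith [Real.pi_pos]
    intro h
    have := Real.injOn_cos (hmem a ha) (hmem b hb) h
    have hne : (a:ℝ) ≠ (b:ℝ) := by exact_mod_cast hab
    apply hne
    rw [div_left_inj' hpos.ne', mul_right_inj' Real.pi_ne_zero] at this
    exact this
  -- divisibility
  have hdvd : (∏ k ∈ Finset.range N, (X - C (lam k))) ∣ M.charpoly := by
    apply Finset.prod_dvd_of_coprime
    · intro a ha b hb hab
      exact isCoprime_X_sub_C_of_isUnit_sub
        (sub_ne_zero_of_ne (hinj a ha b hb hab)).isUnit
    · intro k hk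
      exact Polynomial.dvd_iff_isRoot.mpr (hroot k hk)
  -- degree and leading coefficient comparison
  have hqmonic : (∏ k ∈ Finset.range N, (X - C (lam k))).Monic :=
    monic_prod_of_monic _ _ fun _ _ => monic_X_sub_C _
  have hpdeg : M.charpoly.natDegree = N := by
    rw [Matrix.charpoly_natDegree_eq_dim, Fintype.card_fin]
  have hqdeg : (∏ k ∈ Finset.range N, (X - C (lam k))).natDegree = N := by
    rw [Polynomial.natDegree_prod _ _ fun k _ => X_sub_C_ne_zero (lam k)]
    simp
  exact (Polynomial.eq_of_dvd_of_natDegree_le_of_leadingCoeff hdvd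
    (by rw [hpdeg, hqdeg]) (by rw [hqmonic, M.charpoly_monic])).symm
end

section
/- For a connected weighted graph, the commute time admits the spectral representation κ(x_n, x_m) = ∑_{k=2}^{N} (1/(1−λ_k)) · (φ_k(x_n)/√π_n − φ_k(x_m)/√π_m)², where λ_1 = 1 > λ_2 ≥ ... ≥ λ_N > −1 are the eigenvalues of D^{−1/2} W D^{−1/2} with orthonormal eigenvectors φ_k, and π is the stationary distribution of the random walk. -/
open Matrix BigOperators

variable {V : Type*} [Fintype V] [DecidableEq V]

/-- Transition matrix `P = D⁻¹W` of the random walk on a weighted graph. -/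
noncomputable def transition (w : Matrix V V ℝ) : Matrix V V ℝ :=
  Matrix.of fun a b => w a b / ∑ c, w a c

/-- The sub-stochastic matrix obtained by killing the walk at `v`. -/
noncomputable def killAt (P : Matrix V V ℝ) (v : V) : Matrix V V ℝ :=
  Matrix.of fun a b => if b = v then 0 else P a b

/-- Expected hitting time `h(u,v) = ∑_{t ≥ 0} P(T_v > t)` of `v` starting from `u`. -/
noncomputable def hitTime (P : Matrix V V ℝ) (u v : V) : ℝ :=
  if u = v then 0 else ∑' t : ℕ, ((killAt P v ^ t) *ᵥ (fun _ => (1 : ℝ))) u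

/-- Commute time `κ(u,v) = h(u,v) + h(v,u)` for the random walk on the weighted graph. -/
noncomputable def commuteTime (w : Matrix V V ℝ) (u v : V) : ℝ :=
  hitTime (transition w) u v + hitTime (transition w) v u

/-- The graph underlying a weight matrix: `a ~ b` iff `a ≠ b` and the weight is nonzero. -/
def wGraph (w : Matrix V V ℝ) : SimpleGraph V where
  Adj a b := a ≠ b ∧ (w a b ≠ 0 ∨ w b a ≠ 0)
  symm := ⟨fun _ _ h => ⟨h.1.symm, h.2.symm⟩⟩
  loopless := ⟨fun _ h => h.1 rfl⟩

namespace CommuteAux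
open Finset Filter
variable {V : Type*} [Fintype V] [DecidableEq V]

variable {V : Type*} [Fintype V] [DecidableEq V]
variable {w : Matrix V V ℝ} {v : V}

noncomputable def qvec (Q : Matrix V V ℝ) (t : ℕ) : V → ℝ :=
  (Q ^ t) *ᵥ (fun _ => (1 : ℝ))

lemma qvec_zero (Q : Matrix V V ℝ) (u : V) : qvec Q 0 u = 1 := by
  simp [qvec]

lemma qvec_succ (Q : Matrix V V ℝ) (t : ℕ) (u : V) :
    qvec Q (t + 1) u = ∑ b, Q u b * qvec Q t b := by
  rw [qvec, pow_succ', ← mulVec_mulVec]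
  simp [mulVec, dotProduct, qvec]

lemma qvec_entry (Q : Matrix V V ℝ) (t : ℕ) (u : V) :
    qvec Q t u = ∑ b, (Q ^ t) u b := by
  simp [qvec, mulVec, dotProduct]

lemma qvec_add (Q : Matrix V V ℝ) (s t : ℕ) (u : V) :
    qvec Q (s + t) u = ∑ b, (Q ^ s) u b * qvec Q t b := by
  rw [qvec, pow_add, ← mulVec_mulVec]
  simp [mulVec, dotProduct, qvec]

lemma pow_entry_nonneg {Q : Matrix V V ℝ} (hQ0 : ∀ a b, 0 ≤ Q a b) (t : ℕ) :
    ∀ a b, 0 ≤ (Q ^ t) a b := by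
  induction t with
  | zero => intro a b; simp [Matrix.one_apply]; positivity
  | succ t ih =>
    intro a b
    rw [pow_succ]
    exact Finset.sum_nonneg fun c _ => mul_nonneg (ih a c) (hQ0 c b)

lemma pow_col_zero {Q : Matrix V V ℝ} {v : V} (hcol : ∀ c, Q c v = 0) (t : ℕ) (u : V) :
    (Q ^ (t + 1)) u v = 0 := by
  rw [pow_succ]
  simp [Matrix.mul_apply, hcol]

lemma qvec_nonneg {Q : Matrix V V ℝ} (hQ0 : ∀ a b, 0 ≤ Q a b) (t : ℕ) (u : V) :
    0 ≤ qvec Q t u := by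
  unfold qvec mulVec dotProduct
  exact Finset.sum_nonneg fun c _ => by
    simpa using pow_entry_nonneg hQ0 t u c

lemma qvec_le_one {Q : Matrix V V ℝ} (hQ0 : ∀ a b, 0 ≤ Q a b)
    (hQ1 : ∀ a, ∑ b, Q a b ≤ 1) (t : ℕ) (u : V) : qvec Q t u ≤ 1 := by
  induction t generalizing u with
  | zero => simp [qvec_zero]
  | succ t ih =>
    rw [qvec_succ]
    calc ∑ b, Q u b * qvec Q t b ≤ ∑ b, Q u b * 1 :=
          Finset.sum_le_sum fun b _ => mul_le_mul_of_nonneg_left (ih b) (hQ0 u b)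
    _ ≤ 1 := by simpa using hQ1 u

lemma qvec_succ_le {Q : Matrix V V ℝ} (hQ0 : ∀ a b, 0 ≤ Q a b)
    (hQ1 : ∀ a, ∑ b, Q a b ≤ 1) (t : ℕ) (u : V) :
    qvec Q (t + 1) u ≤ qvec Q t u := by
  induction t generalizing u with
  | zero => simpa [qvec_zero] using qvec_le_one hQ0 hQ1 1 u
  | succ t ih =>
    rw [qvec_succ, qvec_succ]
    exact Finset.sum_le_sum fun b _ => mul_le_mul_of_nonneg_left (ih b) (hQ0 u b)

lemma qvec_anti {Q : Matrix V V ℝ} (hQ0 : ∀ a b, 0 ≤ Q a b)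
    (hQ1 : ∀ a, ∑ b, Q a b ≤ 1) (u : V) {s t : ℕ} (h : s ≤ t) :
    qvec Q t u ≤ qvec Q s u := by
  induction t with
  | zero => simp_all
  | succ t ih =>
    rcases Nat.eq_or_lt_of_le h with rfl | h'
    · exact le_refl _
    exact le_trans (qvec_succ_le hQ0 hQ1 t u) (ih (Nat.lt_succ_iff.mp h'))

lemma qvec_decay_step {Q : Matrix V V ℝ} (hQ0 : ∀ a b, 0 ≤ Q a b)
    {v : V} (hcol : ∀ c, Q c v = 0) {T : ℕ} {r : ℝ}
    (hr : ∀ b, b ≠ v → qvec Q T b ≤ r) (t : ℕ) (u : V) :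
    qvec Q (t + 1 + T) u ≤ r * qvec Q (t + 1) u := by
  rw [qvec_add Q (t + 1) T u]
  have : ∀ b ∈ Finset.univ, (Q ^ (t+1)) u b * qvec Q T b ≤ (Q ^ (t+1)) u b * r := by
    intro b _
    rcases eq_or_ne b v with rfl | hb
    · simp [pow_col_zero hcol]
    · exact mul_le_mul_of_nonneg_left (hr b hb) (pow_entry_nonneg hQ0 _ u b)
  calc ∑ b, (Q ^ (t+1)) u b * qvec Q T b ≤ ∑ b, (Q ^ (t+1)) u b * r :=
        Finset.sum_le_sum this
  _ = r * qvec Q (t + 1) u := by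
      rw [qvec_entry, Finset.mul_sum]
      exact Finset.sum_congr rfl fun b _ => mul_comm _ _

lemma qvec_geom {Q : Matrix V V ℝ} (hQ0 : ∀ a b, 0 ≤ Q a b)
    (hQ1 : ∀ a, ∑ b, Q a b ≤ 1)
    {v : V} (hcol : ∀ c, Q c v = 0) {T : ℕ} {r : ℝ} (hr0 : 0 ≤ r)
    (hr : ∀ b, b ≠ v → qvec Q T b ≤ r) (k : ℕ) (u : V) :
    qvec Q (k * T + 1) u ≤ r ^ k := by
  induction k generalizing u with
  | zero => simpa using qvec_le_one hQ0 hQ1 1 u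
  | succ k ih =>
    have h1 : (k + 1) * T + 1 = k * T + 1 + T := by ring
    rw [h1]
    calc qvec Q (k * T + 1 + T) u ≤ r * qvec Q (k * T + 1) u :=
          qvec_decay_step hQ0 hcol hr _ u
    _ ≤ r * r ^ k := mul_le_mul_of_nonneg_left (ih u) hr0
    _ = r ^ (k + 1) := (pow_succ' r k).symm

lemma qvec_le_pow {Q : Matrix V V ℝ} (hQ0 : ∀ a b, 0 ≤ Q a b)
    (hQ1 : ∀ a, ∑ b, Q a b ≤ 1)
    {v : V} (hcol : ∀ c, Q c v = 0) {T : ℕ} (hT : 0 < T) {r : ℝ} (hr0 : 0 ≤ r)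
    (hr : ∀ b, b ≠ v → qvec Q T b ≤ r) (t : ℕ) (u : V) :
    qvec Q (t + 1) u ≤ r ^ (t / T) := by
  have h1 : t / T * T + 1 ≤ t + 1 := by
    have := Nat.div_mul_le_self t T
    omega
  exact le_trans (qvec_anti hQ0 hQ1 u h1) (qvec_geom hQ0 hQ1 hcol hr0 hr _ u)

set_option maxHeartbeats 1000000 in
lemma summable_pow_div {r : ℝ} (hr0 : 0 ≤ r) (hr1 : r < 1) (T : ℕ) (hT : 0 < T) :
    Summable fun t : ℕ => r ^ (t / T) := by
  have : NeZero T := ⟨hT.ne'⟩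
  have hg : Summable (fun _ : Fin T => (1 : ℝ)) := Summable.of_finite
  have h : Summable fun p : ℕ × Fin T => r ^ p.1 * (1 : ℝ) :=
    Summable.mul_of_nonneg (summable_geometric_of_lt_one hr0 hr1)
      hg (fun _ => pow_nonneg hr0 _) (fun _ => zero_le_one)
  have h2 := ((Nat.divModEquiv T).summable_iff
    (f := fun p : ℕ × Fin T => r ^ p.1 * (1 : ℝ))).mpr h
  simpa [Function.comp_def, Nat.divModEquiv] using h2

lemma summable_qvec {Q : Matrix V V ℝ} (hQ0 : ∀ a b, 0 ≤ Q a b)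
    (hQ1 : ∀ a, ∑ b, Q a b ≤ 1)
    {v : V} (hcol : ∀ c, Q c v = 0) {T : ℕ} (hT : 0 < T) {r : ℝ} (hr0 : 0 ≤ r)
    (hr1 : r < 1) (hr : ∀ b, b ≠ v → qvec Q T b ≤ r) (u : V) :
    Summable fun t => qvec Q t u := by
  rw [← summable_nat_add_iff 1]
  exact Summable.of_nonneg_of_le (fun t => qvec_nonneg hQ0 _ u)
    (fun t => qvec_le_pow hQ0 hQ1 hcol hT hr0 hr t u)
    (summable_pow_div hr0 hr1 T hT)

lemma tendsto_qvec {Q : Matrix V V ℝ} (hQ0 : ∀ a b, 0 ≤ Q a b)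
    (hQ1 : ∀ a, ∑ b, Q a b ≤ 1)
    {v : V} (hcol : ∀ c, Q c v = 0) {T : ℕ} (hT : 0 < T) {r : ℝ} (hr0 : 0 ≤ r)
    (hr1 : r < 1) (hr : ∀ b, b ≠ v → qvec Q T b ≤ r) (u : V) :
    Tendsto (fun t => qvec Q t u) atTop (nhds 0) :=
  (summable_qvec hQ0 hQ1 hcol hT hr0 hr1 hr u).tendsto_atTop_zero

lemma unique_sol [Nonempty V] {Q : Matrix V V ℝ} (hQ0 : ∀ a b, 0 ≤ Q a b)
    {v : V} (hcol : ∀ c, Q c v = 0) {e : V → ℝ}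
    (he : ∀ u, u ≠ v → e u = ∑ b, Q u b * e b) (hev : e v = 0)
    (hdecay : ∀ u, Tendsto (fun t => qvec Q t u) atTop (nhds 0)) :
    ∀ u, e u = 0 := by
  have key : ∀ t u, u ≠ v → e u = ∑ b, (Q ^ t) u b * e b := by
    intro t
    induction t with
    | zero => intro u hu; simp [Matrix.one_apply]
    | succ t ih =>
      intro u hu
      have : ∀ c ∈ Finset.univ, Q u c * (∑ b, (Q ^ t) c b * e b) = Q u c * e c := by
        intro c _
        rcases eq_or_ne c v with rfl | hc
        · simp [hcol]
        · rw [← ih c hc]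
      calc e u = ∑ c, Q u c * e c := he u hu
      _ = ∑ c, Q u c * (∑ b, (Q ^ t) c b * e b) := (Finset.sum_congr rfl this).symm
      _ = ∑ c, ∑ b, Q u c * ((Q ^ t) c b * e b) := by
          exact Finset.sum_congr rfl fun c _ => Finset.mul_sum _ _ _
      _ = ∑ b, ∑ c, Q u c * ((Q ^ t) c b * e b) := Finset.sum_comm
      _ = ∑ b, (Q ^ (t + 1)) u b * e b := by
          refine Finset.sum_congr rfl fun b _ => ?_
          rw [pow_succ', Matrix.mul_apply, Finset.sum_mul]
          exact Finset.sum_congr rfl fun c _ => (mul_assoc _ _ _).symm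
  intro u
  rcases eq_or_ne u v with rfl | hu
  · exact hev
  set C := Finset.univ.sup' Finset.univ_nonempty (fun b => |e b|) with hC
  have hCb : ∀ b, |e b| ≤ C := by
    intro b; rw [hC]; exact Finset.le_sup' (fun b => |e b|) (Finset.mem_univ b)
  have hC0 : 0 ≤ C := le_trans (abs_nonneg _) (hCb u)
  have hbound : ∀ t, |e u| ≤ C * qvec Q t u := by
    intro t
    rw [key t u hu]
    calc |∑ b, (Q ^ t) u b * e b| ≤ ∑ b, |(Q ^ t) u b * e b| :=
          Finset.abs_sum_le_sum_abs _ _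
    _ ≤ ∑ b, (Q ^ t) u b * C := by
        refine Finset.sum_le_sum fun b _ => ?_
        rw [abs_mul, abs_of_nonneg (pow_entry_nonneg hQ0 t u b)]
        exact mul_le_mul_of_nonneg_left (hCb b) (pow_entry_nonneg hQ0 t u b)
    _ = C * qvec Q t u := by
        rw [qvec_entry, Finset.mul_sum]
        exact Finset.sum_congr rfl fun b _ => mul_comm _ _
  have hlim : Tendsto (fun t => C * qvec Q t u) atTop (nhds 0) := by
    simpa using (hdecay u).const_mul C
  have : |e u| ≤ 0 := ge_of_tendsto' hlim hbound
  exact abs_eq_zero.mp (le_antisymm this (abs_nonneg _))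

lemma functional_eq {Q : Matrix V V ℝ} {v : V} (hcol : ∀ c, Q c v = 0)
    (hsum : ∀ b, Summable fun t => qvec Q t b)
    {H : V → ℝ} (hH : ∀ b, b ≠ v → H b = ∑' t, qvec Q t b) (hHv : H v = 0) :
    ∀ u, u ≠ v → H u = 1 + ∑ b, Q u b * H b := by
  intro u hu
  have h1 : H u = qvec Q 0 u + ∑' t, qvec Q (t + 1) u := by
    rw [hH u hu]; exact Summable.tsum_eq_zero_add (hsum u)
  have h2 : ∑' t, qvec Q (t + 1) u = ∑ b, Q u b * ∑' t, qvec Q t b := by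
    have hswap := Summable.tsum_finsetSum (s := Finset.univ) (f := fun (b : V) (t : ℕ) => Q u b * qvec Q t b)
      (fun b _ => (hsum b).mul_left (Q u b))
    rw [tsum_congr (fun t => qvec_succ Q t u), hswap]
    exact Finset.sum_congr rfl fun b _ => tsum_mul_left
  have h3 : ∑ b, Q u b * (∑' t, qvec Q t b) = ∑ b, Q u b * H b := by
    refine Finset.sum_congr rfl fun b _ => ?_
    rcases eq_or_ne b v with rfl | hb
    · simp [hcol]
    · rw [hH b hb]
  rw [h1, qvec_zero, h2, h3]


lemma trans_nonneg (hnn : ∀ a b, 0 ≤ w a b) (hdeg : ∀ a, 0 < ∑ b, w a b) :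
    ∀ a b, 0 ≤ transition w a b := fun a b => div_nonneg (hnn a b) (hdeg a).le

lemma trans_sum (hdeg : ∀ a, 0 < ∑ b, w a b) (a : V) :
    ∑ b, transition w a b = 1 := by
  simp only [transition, Matrix.of_apply]
  rw [← Finset.sum_div, div_self (hdeg a).ne']

lemma kill_nonneg (hnn : ∀ a b, 0 ≤ w a b) (hdeg : ∀ a, 0 < ∑ b, w a b) :
    ∀ a b, 0 ≤ killAt (transition w) v a b := by
  intro a b
  simp only [killAt, Matrix.of_apply]
  split
  · exact le_refl 0
  · exact trans_nonneg hnn hdeg a b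

lemma kill_col (c : V) : killAt (transition w) v c v = 0 := by simp [killAt]

lemma kill_sum (hdeg : ∀ a, 0 < ∑ b, w a b) (a : V) :
    ∑ b, killAt (transition w) v a b = 1 - transition w a v := by
  have h1 : ∑ b, killAt (transition w) v a b
      = ∑ b ∈ Finset.univ.erase v, killAt (transition w) v a b :=
    (Finset.sum_erase _ (kill_col a)).symm
  have h2 : ∑ b ∈ Finset.univ.erase v, killAt (transition w) v a b
      = ∑ b ∈ Finset.univ.erase v, transition w a b := by
    refine Finset.sum_congr rfl fun b hb => ?_
    simp [killAt, (Finset.mem_erase.mp hb).1]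
  rw [h1, h2, Finset.sum_erase_eq_sub (Finset.mem_univ v), trans_sum hdeg a]

lemma kill_sum_le (hnn : ∀ a b, 0 ≤ w a b) (hdeg : ∀ a, 0 < ∑ b, w a b) (a : V) :
    ∑ b, killAt (transition w) v a b ≤ 1 := by
  rw [kill_sum hdeg a]
  linarith [trans_nonneg hnn hdeg a v]

lemma adj_pos (hsym : ∀ a b, w a b = w b a) (hnn : ∀ a b, 0 ≤ w a b)
    (hdeg : ∀ a, 0 < ∑ b, w a b) {a b : V} (h : (wGraph w).Adj a b) :
    0 < transition w a b := by
  have hw : w a b ≠ 0 := by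
    rcases h.2 with h' | h'
    · exact h'
    · rw [hsym]; exact h'
  exact div_pos ((hnn a b).lt_of_ne (Ne.symm hw)) (hdeg a)


lemma qvec_lt_one_of_adj_v (hsym : ∀ a b, w a b = w b a) (hnn : ∀ a b, 0 ≤ w a b)
    (hdeg : ∀ a, 0 < ∑ b, w a b) {u : V} (hadj : (wGraph w).Adj u v) (t : ℕ) :
    qvec (killAt (transition w) v) (t + 1) u < 1 := by
  set Q := killAt (transition w) v with hQ
  have h1 : qvec Q (t + 1) u ≤ ∑ b, Q u b := by
    rw [qvec_succ]
    calc ∑ b, Q u b * qvec Q t b ≤ ∑ b, Q u b * 1 :=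
          Finset.sum_le_sum fun b _ => mul_le_mul_of_nonneg_left
            (qvec_le_one (kill_nonneg hnn hdeg) (kill_sum_le hnn hdeg) t b)
            (kill_nonneg hnn hdeg u b)
    _ = ∑ b, Q u b := by simp
  have h2 : ∑ b, Q u b < 1 := by
    rw [hQ, kill_sum hdeg u]
    linarith [adj_pos hsym hnn hdeg hadj]
  exact lt_of_le_of_lt h1 h2

lemma qvec_lt_one_of_adj (hsym : ∀ a b, w a b = w b a) (hnn : ∀ a b, 0 ≤ w a b)
    (hdeg : ∀ a, 0 < ∑ b, w a b) {u b : V} (hadj : (wGraph w).Adj u b) (hb : b ≠ v) (t : ℕ)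
    (hqb : qvec (killAt (transition w) v) t b < 1) :
    qvec (killAt (transition w) v) (t + 1) u < 1 := by
  set Q := killAt (transition w) v with hQ
  have hQ0 := kill_nonneg (v := v) hnn hdeg
  have hQ1 := kill_sum_le (v := v) hnn hdeg
  have hQub : 0 < Q u b := by
    have : Q u b = transition w u b := by simp [hQ, killAt, hb]
    rw [this]; exact adj_pos hsym hnn hdeg hadj
  rw [qvec_succ, ← Finset.add_sum_erase _ _ (Finset.mem_univ b)]
  have hs1 : Q u b * qvec Q t b < Q u b * 1 := by
    exact (mul_lt_mul_iff_right₀ hQub).mpr hqb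
  have hs2 : ∑ c ∈ Finset.univ.erase b, Q u c * qvec Q t c
      ≤ ∑ c ∈ Finset.univ.erase b, Q u c * 1 :=
    Finset.sum_le_sum fun c _ => mul_le_mul_of_nonneg_left (qvec_le_one hQ0 hQ1 t c) (hQ0 u c)
  calc Q u b * qvec Q t b + ∑ c ∈ Finset.univ.erase b, Q u c * qvec Q t c
      < Q u b * 1 + ∑ c ∈ Finset.univ.erase b, Q u c * 1 := add_lt_add_of_lt_of_le hs1 hs2
  _ = ∑ c, Q u c := by
      rw [show (∑ c, Q u c) = ∑ c, Q u c * 1 by simp,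
        ← Finset.add_sum_erase _ (fun c => Q u c * 1) (Finset.mem_univ b)]
  _ ≤ 1 := hQ1 u

lemma qvec_lt_one_of_walk (hsym : ∀ a b, w a b = w b a) (hnn : ∀ a b, 0 ≤ w a b)
    (hdeg : ∀ a, 0 < ∑ b, w a b) : ∀ (t : ℕ) (u : V) (p : (wGraph w).Walk u v), u ≠ v →
    p.length ≤ t + 1 → qvec (killAt (transition w) v) (t + 1) u < 1 := by
  intro t
  induction t with
  | zero =>
    intro u p hu hlen
    cases p with
    | nil => exact absurd rfl hu
    | cons h q =>
      rename_i b
      have hb : b = v := by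
        have : q.length = 0 := by simp only [SimpleGraph.Walk.length_cons] at hlen; omega
        exact SimpleGraph.Walk.eq_of_length_eq_zero this
      subst hb
      exact qvec_lt_one_of_adj_v hsym hnn hdeg h 0
  | succ t ih =>
    intro u p hu hlen
    cases p with
    | nil => exact absurd rfl hu
    | cons h q =>
      rename_i b
      rcases eq_or_ne b v with rfl | hb
      · exact qvec_lt_one_of_adj_v hsym hnn hdeg h (t + 1)
      · have hlen' : q.length ≤ t + 1 := by
          simp [SimpleGraph.Walk.length_cons] at hlen; omega
        exact qvec_lt_one_of_adj hsym hnn hdeg h hb (t + 1) (ih b q hb hlen')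


lemma completeness {φ : V → V → ℝ}
    (horth : ∀ k l, ∑ i, φ k i * φ l i = if k = l then (1 : ℝ) else 0) :
    ∀ a b, ∑ k, φ k a * φ k b = if a = b then (1 : ℝ) else 0 := by
  have h1 : (Matrix.of φ) * (Matrix.of φ)ᵀ = 1 := by
    ext k l
    simp only [Matrix.mul_apply, Matrix.transpose_apply, Matrix.of_apply]
    rw [horth k l, Matrix.one_apply]
  have h2 := mul_eq_one_comm.mp h1
  intro a b
  calc ∑ k, φ k a * φ k b = ((Matrix.of φ)ᵀ * (Matrix.of φ)) a b := by
        simp only [Matrix.mul_apply, Matrix.transpose_apply, Matrix.of_apply]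
  _ = (1 : Matrix V V ℝ) a b := by rw [h2]
  _ = if a = b then 1 else 0 := Matrix.one_apply

lemma SG_entry {lam : V → ℝ} {φ : V → V → ℝ} {S : Matrix V V ℝ}
    (heigE : ∀ k a, ∑ i, S a i * φ k i = lam k * φ k a) (s : Finset V) (a b : V) :
    ∑ i, S a i * ∑ k ∈ s, φ k i * φ k b / (1 - lam k)
      = ∑ k ∈ s, lam k * φ k a * (φ k b / (1 - lam k)) := by
  calc ∑ i, S a i * ∑ k ∈ s, φ k i * φ k b / (1 - lam k)
      = ∑ i, ∑ k ∈ s, S a i * φ k i * (φ k b / (1 - lam k)) := by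
        refine Finset.sum_congr rfl fun i _ => ?_
        rw [Finset.mul_sum]
        exact Finset.sum_congr rfl fun k _ => by ring
  _ = ∑ k ∈ s, ∑ i, S a i * φ k i * (φ k b / (1 - lam k)) := Finset.sum_comm
  _ = ∑ k ∈ s, (∑ i, S a i * φ k i) * (φ k b / (1 - lam k)) := by
        refine Finset.sum_congr rfl fun k _ => (Finset.sum_mul _ _ _).symm
  _ = ∑ k ∈ s, lam k * φ k a * (φ k b / (1 - lam k)) := by
        refine Finset.sum_congr rfl fun k _ => by rw [heigE k a]

lemma LG_entry {lam : V → ℝ} {φ : V → V → ℝ} {S : Matrix V V ℝ} {z : V}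
    (horth : ∀ k l, ∑ i, φ k i * φ l i = if k = l then (1 : ℝ) else 0)
    (heigE : ∀ k a, ∑ i, S a i * φ k i = lam k * φ k a)
    (hlam : ∀ k, k ≠ z → lam k ≠ 1) (a b : V) :
    (∑ k ∈ Finset.univ \ {z}, φ k a * φ k b / (1 - lam k))
      - ∑ i, S a i * ∑ k ∈ Finset.univ \ {z}, φ k i * φ k b / (1 - lam k)
      = (if a = b then 1 else 0) - φ z a * φ z b := by
  rw [SG_entry heigE, ← Finset.sum_sub_distrib]
  have h1 : ∀ k ∈ Finset.univ \ {z},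
      φ k a * φ k b / (1 - lam k) - lam k * φ k a * (φ k b / (1 - lam k))
        = φ k a * φ k b := by
    intro k hk
    have hkz : k ≠ z := by simpa [Finset.mem_sdiff] using hk
    have h : (1 : ℝ) - lam k ≠ 0 := sub_ne_zero.mpr (Ne.symm (hlam k hkz))
    field_simp
  rw [Finset.sum_congr rfl h1, Finset.sum_sdiff_eq_sub (Finset.subset_univ _),
    Finset.sum_singleton, completeness horth a b]


lemma hitTime_eq [Nontrivial V] (hsym : ∀ a b, w a b = w b a) (hnn : ∀ a b, 0 ≤ w a b)
    (hdeg : ∀ a, 0 < ∑ b, w a b) (hconn : (wGraph w).Connected)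
    (g : V → ℝ) (hgv : g v = 0)
    (hgfun : ∀ u, u ≠ v → g u = 1 + ∑ b, killAt (transition w) v u b * g b) :
    ∀ u, hitTime (transition w) u v = g u := by
  have hQ0 : ∀ a b, 0 ≤ killAt (transition w) v a b := kill_nonneg hnn hdeg
  have hQ1 : ∀ a, ∑ b, killAt (transition w) v a b ≤ 1 := kill_sum_le hnn hdeg
  have hcol : ∀ c, killAt (transition w) v c v = 0 := kill_col
  set Q := killAt (transition w) v with hQdef
  set T := Fintype.card V with hTdef
  have hT : 0 < T := Fintype.card_pos
  obtain ⟨u0, hu0⟩ := exists_ne v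
  have hne : (Finset.univ.erase v).Nonempty :=
    ⟨u0, Finset.mem_erase.mpr ⟨hu0, Finset.mem_univ u0⟩⟩
  have hlt : ∀ b, b ≠ v → qvec Q T b < 1 := by
    intro b hb
    obtain ⟨p0⟩ := hconn.preconnected b v
    have hlen : p0.toPath.1.length < T := p0.toPath.2.length_lt
    have h1 : T - 1 + 1 = T := by omega
    have := qvec_lt_one_of_walk hsym hnn hdeg (T - 1) b p0.toPath.1 hb (by omega)
    rwa [h1] at this
  set r := (Finset.univ.erase v).sup' hne (fun b => qvec Q T b) with hrdef
  have hr1 : r < 1 := (Finset.sup'_lt_iff hne).mpr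
    fun b hb => hlt b (Finset.mem_erase.mp hb).1
  have hr : ∀ b, b ≠ v → qvec Q T b ≤ r := fun b hb =>
    Finset.le_sup' (fun b => qvec Q T b) (Finset.mem_erase.mpr ⟨hb, Finset.mem_univ b⟩)
  have hr0 : 0 ≤ r := le_trans (qvec_nonneg hQ0 T u0) (hr u0 hu0)
  have hsumm : ∀ b, Summable fun t => qvec Q t b :=
    summable_qvec hQ0 hQ1 hcol hT hr0 hr1 hr
  set H : V → ℝ := fun u => hitTime (transition w) u v with hHdef
  have hH : ∀ b, b ≠ v → H b = ∑' t, qvec Q t b := by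
    intro b hb
    show hitTime (transition w) b v = _
    rw [hitTime, if_neg hb]
    rfl
  have hHv : H v = 0 := by show hitTime (transition w) v v = 0; rw [hitTime, if_pos rfl]
  have hfun := functional_eq hcol hsumm hH hHv
  have hev : H v - g v = 0 := by rw [hHv, hgv, sub_zero]
  have he : ∀ u, u ≠ v → H u - g u = ∑ b, Q u b * (H b - g b) := by
    intro u hu
    rw [hfun u hu, hgfun u hu]
    rw [show (∑ b, Q u b * (H b - g b)) = ∑ b, (Q u b * H b - Q u b * g b) from
      Finset.sum_congr rfl fun b _ => mul_sub _ _ _, Finset.sum_sub_distrib]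
    ring
  have hdecay : ∀ u, Tendsto (fun t => qvec Q t u) atTop (nhds 0) :=
    tendsto_qvec hQ0 hQ1 hcol hT hr0 hr1 hr
  have hzero := unique_sol hQ0 hcol he hev hdecay
  intro u
  have := hzero u
  show H u = g u
  linarith

end CommuteAux

/-- **Spectral representation of the commute time.**  For a connected weighted graph,
`κ(x_n,x_m) = ∑_{k=2}^N (1/(1−λ_k)) (φ_k(x_n)/√π_n − φ_k(x_m)/√π_m)²`, where
`1 = λ_1 > λ_2 ≥ … ≥ λ_N > −1` are the eigenvalues of `D^{−1/2} W D^{−1/2}` with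
orthonormal eigenvectors `φ_k`, `φ_1 = √π`, and `π` is the stationary distribution. -/
theorem commute_time_spectral_representation (N : ℕ) (hN : 2 ≤ N)
    (w : Matrix (Fin N) (Fin N) ℝ)
    (hsym : ∀ a b, w a b = w b a) (hnn : ∀ a b, 0 ≤ w a b)
    (hdeg : ∀ a, 0 < ∑ b, w a b) (hconn : (wGraph w).Connected)
    (π : Fin N → ℝ) (hπ : ∀ n, π n = (∑ b, w n b) / ∑ a, ∑ b, w a b)
    (lam : Fin N → ℝ) (φ : Fin N → Fin N → ℝ)
    (heig : ∀ k, (Matrix.of fun a b =>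
        w a b / (Real.sqrt (∑ c, w a c) * Real.sqrt (∑ c, w b c)) :
          Matrix (Fin N) (Fin N) ℝ).mulVec (φ k) = lam k • φ k)
    (horth : ∀ k l, ∑ i, φ k i * φ l i = if k = l then (1 : ℝ) else 0)
    (hanti : Antitone lam)
    (hlam1 : lam ⟨0, by omega⟩ = 1)
    (hlamlt : ∀ k : Fin N, k ≠ ⟨0, by omega⟩ → lam k < 1)
    (hlamgt : ∀ k : Fin N, -1 < lam k)
    (hφ1 : ∀ n, φ ⟨0, by omega⟩ n = Real.sqrt (π n)) :
    ∀ n m : Fin N,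
      commuteTime w n m
        = ∑ k ∈ Finset.univ \ {(⟨0, by omega⟩ : Fin N)},
            (1 / (1 - lam k)) *
              (φ k n / Real.sqrt (π n) - φ k m / Real.sqrt (π m)) ^ 2 := by
  intro n m
  have hNt : Nontrivial (Fin N) :=
    ⟨⟨0, by omega⟩, ⟨1, by omega⟩, by simp [Fin.ext_iff]⟩
  set z : Fin N := ⟨0, by omega⟩ with hzdef
  set d : Fin N → ℝ := fun a => ∑ c, w a c with hddef
  have hdpos : ∀ a, 0 < d a := hdeg
  set S : Matrix (Fin N) (Fin N) ℝ := Matrix.of (fun a b =>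
    w a b / (Real.sqrt (∑ c, w a c) * Real.sqrt (∑ c, w b c))) with hSdef
  have heigE : ∀ k a, ∑ i, S a i * φ k i = lam k * φ k a := by
    intro k a
    have h := congrFun (heig k) a
    simpa [Matrix.mulVec, dotProduct, Pi.smul_apply, smul_eq_mul] using h
  have hlamne : ∀ k, k ≠ z → lam k ≠ 1 := fun k hk => ne_of_lt (hlamlt k hk)
  set G : Fin N → Fin N → ℝ :=
    fun a b => ∑ k ∈ Finset.univ \ {z}, φ k a * φ k b / (1 - lam k) with hGdef
  have hGd : ∀ a b, G a b = ∑ k ∈ Finset.univ \ {z}, φ k a * φ k b / (1 - lam k) :=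
    fun _ _ => rfl
  set vol : ℝ := ∑ a, ∑ b, w a b with hvoldef
  have hvolpos : 0 < vol := Finset.sum_pos (fun a _ => hdeg a) Finset.univ_nonempty
  have hsd : ∀ a, 0 < Real.sqrt (d a) := fun a => Real.sqrt_pos.mpr (hdpos a)
  have hsv : 0 < Real.sqrt vol := Real.sqrt_pos.mpr hvolpos
  have hsqpi : ∀ a, Real.sqrt (π a) = Real.sqrt (d a) / Real.sqrt vol := by
    intro a
    rw [hπ a, Real.sqrt_div (hdpos a).le]
  have hφz : ∀ a, φ z a = Real.sqrt (d a) / Real.sqrt vol := by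
    intro a
    rw [show φ z a = Real.sqrt (π a) from hφ1 a, hsqpi a]
  set g : Fin N → Fin N → ℝ := fun v u =>
    (Real.sqrt vol * Real.sqrt vol) * (G v v / (Real.sqrt (d v) * Real.sqrt (d v))
      - G u v / (Real.sqrt (d u) * Real.sqrt (d v))) with hgdef
  have hgd : ∀ v u, g v u
      = (Real.sqrt vol * Real.sqrt vol) * (G v v / (Real.sqrt (d v) * Real.sqrt (d v))
        - G u v / (Real.sqrt (d u) * Real.sqrt (d v))) := fun _ _ => rfl
  have hgv : ∀ v, g v v = 0 := by intro v; rw [hgd]; simp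
  have hLG : ∀ a b, G a b - ∑ i, S a i * G i b
      = (if a = b then 1 else 0) - φ z a * φ z b := by
    intro a b
    have h := CommuteAux.LG_entry (z := z) horth heigE hlamne a b
    simp_rw [← hGd] at h
    exact h
  have hgfun : ∀ v u, u ≠ v → g v u = 1 + ∑ b, killAt (transition w) v u b * g v b := by
    intro v u hu
    have hQP : ∑ b, killAt (transition w) v u b * g v b
        = ∑ b, transition w u b * g v b := by
      refine Finset.sum_congr rfl fun b _ => ?_
      rcases eq_or_ne b v with rfl | hb
      · rw [hgv]; ring
      · rw [show killAt (transition w) v u b = transition w u b by simp [killAt, hb]]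
    have hPS : ∀ b, transition w u b / Real.sqrt (d b) = S u b / Real.sqrt (d u) := by
      intro b
      show (w u b / ∑ c, w u c) / Real.sqrt (d b)
        = (w u b / (Real.sqrt (∑ c, w u c) * Real.sqrt (∑ c, w b c))) / Real.sqrt (d u)
      have h2 : (∑ c, w u c) = Real.sqrt (d u) * Real.sqrt (d u) :=
        (Real.mul_self_sqrt (hdpos u).le).symm
      rw [div_div, div_div,
        show Real.sqrt (∑ c, w u c) = Real.sqrt (d u) from rfl,
        show Real.sqrt (∑ c, w b c) = Real.sqrt (d b) from rfl]
      rw [show (∑ c, w u c) * Real.sqrt (d b)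
          = Real.sqrt (d u) * Real.sqrt (d b) * Real.sqrt (d u) by
        conv_lhs => rw [h2]
        ring]
    have hsum2 : ∑ b, transition w u b * g v b
        = (Real.sqrt vol * Real.sqrt vol) * (G v v / (Real.sqrt (d v) * Real.sqrt (d v)))
          - (Real.sqrt vol * Real.sqrt vol)
            * ((∑ b, S u b * G b v) / (Real.sqrt (d u) * Real.sqrt (d v))) := by
      have hterm : ∀ b ∈ Finset.univ, transition w u b * g v b
          = (Real.sqrt vol * Real.sqrt vol)
              * (G v v / (Real.sqrt (d v) * Real.sqrt (d v))) * transition w u b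
            - (Real.sqrt vol * Real.sqrt vol)
              * ((S u b * G b v) / (Real.sqrt (d u) * Real.sqrt (d v))) := by
        intro b _
        rw [hgd v b]
        calc transition w u b * ((Real.sqrt vol * Real.sqrt vol)
              * (G v v / (Real.sqrt (d v) * Real.sqrt (d v))
                - G b v / (Real.sqrt (d b) * Real.sqrt (d v))))
            = (Real.sqrt vol * Real.sqrt vol)
                * (G v v / (Real.sqrt (d v) * Real.sqrt (d v))) * transition w u b
              - (Real.sqrt vol * Real.sqrt vol)
                * ((transition w u b / Real.sqrt (d b)) * (G b v / Real.sqrt (d v))) := by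
              ring
        _ = (Real.sqrt vol * Real.sqrt vol)
                * (G v v / (Real.sqrt (d v) * Real.sqrt (d v))) * transition w u b
              - (Real.sqrt vol * Real.sqrt vol)
                * ((S u b / Real.sqrt (d u)) * (G b v / Real.sqrt (d v))) := by
              rw [hPS b]
        _ = (Real.sqrt vol * Real.sqrt vol)
                * (G v v / (Real.sqrt (d v) * Real.sqrt (d v))) * transition w u b
              - (Real.sqrt vol * Real.sqrt vol)
                * ((S u b * G b v) / (Real.sqrt (d u) * Real.sqrt (d v))) := by
              ring
      rw [Finset.sum_congr rfl hterm, Finset.sum_sub_distrib, ← Finset.mul_sum,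
        CommuteAux.trans_sum hdeg u, mul_one, ← Finset.mul_sum, ← Finset.sum_div]
    rw [hQP, hsum2, hgd v u]
    have hkey : ∑ i, S u i * G i v = G u v + φ z u * φ z v := by
      have h := hLG u v
      rw [if_neg hu] at h
      linarith
    rw [hkey, hφz u, hφz v]
    have h1 : Real.sqrt vol ≠ 0 := hsv.ne'
    have h2 : Real.sqrt (d u) ≠ 0 := (hsd u).ne'
    have h3 : Real.sqrt (d v) ≠ 0 := (hsd v).ne'
    field_simp
    ring
  have hhit : ∀ v u, hitTime (transition w) u v = g v u := fun v u =>
    CommuteAux.hitTime_eq hsym hnn hdeg hconn (g v) (hgv v) (hgfun v) u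
  have hcomm : commuteTime w n m = g m n + g n m := by
    rw [commuteTime, hhit m n, hhit n m]
  rw [hcomm, hgd m n, hgd n m]
  simp only [hGd, Finset.sum_div, ← Finset.sum_sub_distrib, Finset.mul_sum,
    ← Finset.sum_add_distrib]
  refine Finset.sum_congr rfl fun k hk => ?_
  have hkz : k ≠ z := by
    simp only [Finset.mem_sdiff, Finset.mem_singleton] at hk
    exact hk.2
  have hck : (1 : ℝ) - lam k ≠ 0 := sub_ne_zero.mpr (Ne.symm (hlamne k hkz))
  rw [hsqpi n, hsqpi m]
  have h1 : Real.sqrt vol ≠ 0 := hsv.ne'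
  have h2 : Real.sqrt (d n) ≠ 0 := (hsd n).ne'
  have h3 : Real.sqrt (d m) ≠ 0 := (hsd m).ne'
  set sv : ℝ := Real.sqrt vol with hsv1
  set sn : ℝ := Real.sqrt (d n) with hsn1
  set sm : ℝ := Real.sqrt (d m) with hsm1
  clear_value sv sn sm
  field_simp
  ring
end
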